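/- If f(x_c) ≤ x_c, then for every n ≥ 1 the only critical point of fⁿ in (a,b) is x_c, and fⁿ has a local maximum at x_c with fⁿ(x_c) ≤ x_c. -/

import Mathlib

open Set Filter Topology

theorem low_critical_value_unique_crit
    (a b x_c : ℝ) (f : ℝ → ℝ) (hab : a < b)
    (hmap : Set.MapsTo f (Set.Icc a b) (Set.Icc a b))
    (hf : ContDiff ℝ 2 f)
    (hxc : x_c ∈ Set.Ioo a b)
    (h2 : deriv (deriv f) x_c < 0)
    (hup : ∀ x ∈ Set.Ico a x_c, 0 < deriv f x)
    (hdn : ∀ x ∈ Set.Ioc x_c b, deriv f x < 0)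
    (hc : f x_c ≤ x_c) :
    ∀ n : ℕ, 1 ≤ n →
      (∀ x ∈ Ioo a b, (deriv (f^[n]) x = 0 ↔ x = x_c)) ∧
      IsLocalMax (f^[n]) x_c ∧ f^[n] x_c ≤ x_c := by
  have hax : a < x_c := hxc.1
  have hxb : x_c < b := hxc.2
  have hd : Differentiable ℝ f := hf.differentiable (by norm_num)
  have hcont : Continuous (deriv f) := hf.continuous_deriv (by norm_num)
  -- deriv f x_c = 0
  have hd0 : deriv f x_c = 0 := by
    have hle0 : deriv f x_c ≤ 0 := by
      refine le_of_tendsto ((hcont.tendsto x_c).mono_left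
        (nhdsWithin_le_nhds : 𝓝[>] x_c ≤ 𝓝 x_c)) ?_
      filter_upwards [Ioc_mem_nhdsGT_of_mem (⟨le_refl x_c, hxb⟩ : x_c ∈ Ico x_c b)] with x hx
      exact (hdn x hx).le
    have hge0 : 0 ≤ deriv f x_c := by
      refine ge_of_tendsto ((hcont.tendsto x_c).mono_left
        (nhdsWithin_le_nhds : 𝓝[<] x_c ≤ 𝓝 x_c)) ?_
      filter_upwards [Ico_mem_nhdsLT_of_mem (⟨hax, le_refl x_c⟩ : x_c ∈ Ioc a x_c)] with x hx
      exact (hup x hx).le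
    linarith
  have hmono : StrictMonoOn f (Icc a x_c) := by
    apply strictMonoOn_of_deriv_pos (convex_Icc a x_c) (hd.continuous.continuousOn)
    intro x hx
    rw [interior_Icc] at hx
    exact hup x ⟨hx.1.le, hx.2⟩
  have hanti : StrictAntiOn f (Icc x_c b) := by
    apply strictAntiOn_of_deriv_neg (convex_Icc x_c b) (hd.continuous.continuousOn)
    intro x hx
    rw [interior_Icc] at hx
    exact hdn x ⟨hx.1, hx.2.le⟩
  have hmax : ∀ x ∈ Icc a b, f x ≤ f x_c := by
    intro x hx
    rcases le_total x x_c with h | h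
    · exact hmono.monotoneOn ⟨hx.1, h⟩ ⟨hax.le, le_refl x_c⟩ h
    · exact hanti.antitoneOn ⟨le_refl x_c, hxb.le⟩ ⟨h, hx.2⟩ h
  have hfle : ∀ x ∈ Icc a b, f x ≤ x_c := fun x hx => (hmax x hx).trans hc
  have hkey : ∀ x ∈ Icc a b, f x = x_c → x = x_c := by
    intro x hx hfx
    by_contra hne
    have hfc : f x_c = x_c := le_antisymm hc (hfx ▸ hmax x hx)
    rcases lt_or_gt_of_ne hne with h | h
    · have := hmono ⟨hx.1, h.le⟩ ⟨hax.le, le_refl x_c⟩ h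
      rw [hfx, hfc] at this; exact lt_irrefl _ this
    · have := hanti ⟨le_refl x_c, hxb.le⟩ ⟨h.le, hx.2⟩ h
      rw [hfx, hfc] at this; exact lt_irrefl _ this
  have hiter : ∀ k, ∀ x ∈ Icc a b, f^[k] x ∈ Icc a b := fun k => hmap.iterate k
  have hle : ∀ k, 1 ≤ k → ∀ x ∈ Icc a b, f^[k] x ≤ x_c := by
    intro k hk x hx
    cases k with
    | zero => omega
    | succ m =>
      rw [Function.iterate_succ_apply']
      exact hfle _ (hiter m x hx)
  have hkey2 : ∀ k x, x ∈ Icc a b → f^[k] x = x_c → x = x_c := by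
    intro k
    induction k with
    | zero => intro x _ h; simpa using h
    | succ m ih =>
      intro x hx h
      rw [Function.iterate_succ_apply'] at h
      exact ih x hx (hkey _ (hiter m x hx) h)
  have hprod : ∀ n (x : ℝ),
      HasDerivAt (f^[n]) (∏ k ∈ Finset.range n, deriv f (f^[k] x)) x := by
    intro n x
    induction n with
    | zero => simpa using hasDerivAt_id x
    | succ m ih =>
      rw [Function.iterate_succ', Finset.prod_range_succ]
      have h1 : HasDerivAt f (deriv f (f^[m] x)) (f^[m] x) := (hd (f^[m] x)).hasDerivAt
      have h2 := h1.comp x ih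
      convert h2 using 1
      all_goals first | rfl | ring
  have hdpos : ∀ n, ∀ x ∈ Icc a b, x < x_c → 0 < deriv (f^[n]) x := by
    intro n x hx hlt
    rw [(hprod n x).deriv]
    apply Finset.prod_pos
    intro k _
    apply hup
    cases k with
    | zero => simpa using ⟨hx.1, hlt⟩
    | succ m =>
      have h1 := hiter (m+1) x hx
      have h2 := hle (m+1) (by omega) x hx
      have h3 : f^[m+1] x ≠ x_c := fun h => (ne_of_lt hlt) (hkey2 _ x hx h)
      exact ⟨h1.1, lt_of_le_of_ne h2 h3⟩
  have hdneg : ∀ n, 1 ≤ n → ∀ x ∈ Icc a b, x_c < x → deriv (f^[n]) x < 0 := by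
    intro n hn x hx hlt
    rw [(hprod n x).deriv]
    obtain ⟨m, rfl⟩ : ∃ m, n = m + 1 := ⟨n - 1, by omega⟩
    rw [Finset.prod_range_succ']
    apply mul_neg_of_pos_of_neg
    · apply Finset.prod_pos
      intro k _
      apply hup
      have h1 := hiter (k+1) x hx
      have h2 := hle (k+1) (by omega) x hx
      have h3 : f^[k+1] x ≠ x_c := fun h => (ne_of_gt hlt) (hkey2 _ x hx h)
      exact ⟨h1.1, lt_of_le_of_ne h2 h3⟩
    · simpa using hdn x ⟨hlt, hx.2⟩
  have hd00 : ∀ n, 1 ≤ n → deriv (f^[n]) x_c = 0 := by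
    intro n hn
    rw [(hprod n x_c).deriv]
    apply Finset.prod_eq_zero (Finset.mem_range.mpr (by omega : 0 < n))
    simpa using hd0
  intro n hn
  have hcontn : Continuous (f^[n]) := hd.continuous.iterate n
  refine ⟨?_, ?_, hle n hn x_c ⟨hax.le, hxb.le⟩⟩
  · intro x hx
    constructor
    · intro h
      by_contra hne
      rcases lt_or_gt_of_ne hne with hlt | hgt
      · exact absurd h (ne_of_gt (hdpos n x ⟨hx.1.le, hx.2.le⟩ hlt))
      · exact absurd h (ne_of_lt (hdneg n hn x ⟨hx.1.le, hx.2.le⟩ hgt))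
    · rintro rfl; exact hd00 n hn
  · have hmonoN : StrictMonoOn (f^[n]) (Icc a x_c) := by
      apply strictMonoOn_of_deriv_pos (convex_Icc _ _) hcontn.continuousOn
      intro x hx
      rw [interior_Icc] at hx
      exact hdpos n x ⟨hx.1.le, (hx.2.trans hxb).le⟩ hx.2
    have hantiN : StrictAntiOn (f^[n]) (Icc x_c b) := by
      apply strictAntiOn_of_deriv_neg (convex_Icc _ _) hcontn.continuousOn
      intro x hx
      rw [interior_Icc] at hx
      exact hdneg n hn x ⟨(hax.trans hx.1).le, hx.2.le⟩ hx.1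
    have hnbd : Icc a b ∈ nhds x_c := Icc_mem_nhds hax hxb
    filter_upwards [hnbd] with x hx
    rcases le_total x x_c with h | h
    · exact hmonoN.monotoneOn ⟨hx.1, h⟩ ⟨hax.le, le_refl x_c⟩ h
    · exact hantiN.antitoneOn ⟨le_refl x_c, hxb.le⟩ ⟨h, hx.2⟩ h
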